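/- Let A = {0, a_2, ..., a_n} with 0 < a_2 < ... < a_n, n ≥ 2, and gcd(a_2, ..., a_n) = 1. If |sA| = s(n-1) + 1 for some s ≥ 2, then A = {0, 1, ..., n-1}. -/

import Mathlib

open Finset Pointwise

/-- The s-fold iterated sumset of a finite set of natural numbers; `sumset A 0 = {0}`. -/
def sumset (A : Finset ℕ) : ℕ → Finset ℕ
  | 0 => {0}
  | s + 1 => A + sumset A s

lemma sumset_nonempty {A : Finset ℕ} (hA : A.Nonempty) (s : ℕ) : (sumset A s).Nonempty := by
  induction s with
  | zero => exact ⟨0, by simp [sumset]⟩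
  | succ k ih => exact hA.add ih

lemma sumset_card_le {A : Finset ℕ} (hA : A.Nonempty) (k : ℕ) :
    (sumset A 2).card + k * (A.card - 1) ≤ (sumset A (k + 2)).card := by
  induction k with
  | zero => simp
  | succ k ih =>
    have hcd := cauchy_davenport_add_of_linearOrder_isCancelAdd hA (sumset_nonempty hA (k + 2))
    have h1 : 1 ≤ A.card := hA.card_pos
    have : (sumset A (k + 2)).card + (A.card - 1) ≤ (sumset A (k + 3)).card := by
      show _ ≤ (A + sumset A (k + 2)).card
      omega
    calc (sumset A 2).card + (k + 1) * (A.card - 1)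
        = (sumset A 2).card + k * (A.card - 1) + (A.card - 1) := by ring
      _ ≤ (sumset A (k + 2)).card + (A.card - 1) := by omega
      _ ≤ _ := this

theorem stmt3 (A : Finset ℕ) (h0 : 0 ∈ A) (hn : 2 ≤ A.card) (hgcd : A.gcd id = 1)
    (s : ℕ) (hs : 2 ≤ s) (h : (sumset A s).card = s * (A.card - 1) + 1) :
    A = Finset.range A.card := by
  have hA : A.Nonempty := ⟨0, h0⟩
  set n := A.card with hncard
  -- the max of A
  set m := A.max' hA with hm
  have hmA : m ∈ A := A.max'_mem hA
  have hle_m : ∀ a ∈ A, a ≤ m := fun a ha => A.le_max' a ha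
  -- |2A| = 2n - 1
  have hAA : sumset A 2 = A + A := by
    show A + (A + sumset A 0) = A + A
    simp [sumset, Finset.add_singleton]
  have hub : (sumset A 2).card ≤ 2 * n - 1 := by
    have hle := sumset_card_le hA (s - 2)
    rw [show s - 2 + 2 = s from by omega, h, ← hncard] at hle
    have hmul : s * (n - 1) = (s - 2) * (n - 1) + 2 * (n - 1) := by
      have hs2 : s = (s - 2) + 2 := by omega
      calc s * (n - 1) = ((s - 2) + 2) * (n - 1) := by rw [← hs2]
        _ = (s - 2) * (n - 1) + 2 * (n - 1) := by ring
    omega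
  -- the union A ∪ (A + m)
  have himgcard : (A.image (· + m)).card = n := Finset.card_image_of_injective _ (add_left_injective m)
  have hinter : A ∩ A.image (· + m) = {m} := by
    apply Finset.Subset.antisymm
    · intro x hx
      rw [Finset.mem_inter, Finset.mem_image] at hx
      obtain ⟨hxA, c, hcA, hc⟩ := hx
      have := hle_m x hxA
      simp only [Finset.mem_singleton]
      omega
    · intro x hx
      rw [Finset.mem_singleton] at hx
      subst hx
      rw [Finset.mem_inter, Finset.mem_image]
      exact ⟨hmA, 0, h0, by simp⟩
  have hunioncard : (A ∪ A.image (· + m)).card = 2 * n - 1 := by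
    have := Finset.card_union_add_card_inter A (A.image (· + m))
    rw [hinter] at this
    simp only [Finset.card_singleton] at this
    omega
  have hsub : A ∪ A.image (· + m) ⊆ A + A := by
    intro x hx
    rw [Finset.mem_union] at hx
    rcases hx with hx | hx
    · have := Finset.add_mem_add h0 hx
      simpa using this
    · rw [Finset.mem_image] at hx
      obtain ⟨c, hcA, hc⟩ := hx
      exact hc ▸ Finset.add_mem_add hcA hmA
  -- equality
  have hkey : A + A = A ∪ A.image (· + m) := by
    apply (Finset.eq_of_subset_of_card_le hsub ?_).symm
    rw [hunioncard, ← hAA]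
    exact hub
  -- d : least positive element
  have hA0 : (A.erase 0).Nonempty := by
    rw [← Finset.card_pos, Finset.card_erase_of_mem h0]; omega
  set d := (A.erase 0).min' hA0 with hd
  have hdA : d ∈ A := Finset.mem_of_mem_erase ((A.erase 0).min'_mem hA0)
  have hdpos : 0 < d := by
    have := (A.erase 0).min'_mem hA0
    rw [Finset.mem_erase] at this
    omega
  have hdmin : ∀ a ∈ A, 0 < a → d ≤ a := by
    intro a ha hapos
    exact (A.erase 0).min'_le a (Finset.mem_erase.2 ⟨by omega, ha⟩)
  -- key step: a ∈ A, a < m → a + d ∈ A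
  have hstep : ∀ a ∈ A, a < m → a + d ∈ A := by
    intro a ha ham
    have : a + d ∈ A + A := Finset.add_mem_add ha hdA
    rw [hkey, Finset.mem_union] at this
    rcases this with hx | hx
    · exact hx
    · rw [Finset.mem_image] at hx
      obtain ⟨c, hcA, hc⟩ := hx
      have hc0 : c = 0 := by
        by_contra hcne
        have := hdmin c hcA (by omega)
        omega
      have : a + d = m := by omega
      rw [this]; exact hmA
  -- d divides m - a for all a ∈ A
  have hdvd_sub : ∀ a ∈ A, d ∣ (m - a) := by
    have : ∀ k, ∀ a ∈ A, m - a ≤ k → d ∣ (m - a) := by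
      intro k
      induction k with
      | zero => intro a ha hk; rw [show m - a = 0 from by omega]; exact dvd_zero d
      | succ k ih =>
        intro a ha hk
        rcases Nat.eq_or_lt_of_le (hle_m a ha) with heq | hlt
        · rw [heq]; simp
        · have had : a + d ∈ A := hstep a ha hlt
          have hadm : a + d ≤ m := hle_m _ had
          have ih' := ih (a + d) had (by omega)
          have : m - a = (m - (a + d)) + d := by omega
          rw [this]
          exact Dvd.dvd.add ih' dvd_rfl
    intro a ha
    exact this (m - a) a ha le_rfl
  -- d divides every element
  have hdvd : ∀ a ∈ A, d ∣ a := by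
    intro a ha
    have h1 := hdvd_sub a ha
    have h2 := hdvd_sub 0 h0
    simp only [Nat.sub_zero] at h2
    have : a = m - (m - a) := by have := hle_m a ha; omega
    rw [this]
    exact Nat.dvd_sub h2 h1
  -- d = 1
  have hd1 : d = 1 := by
    have : d ∣ A.gcd id := Finset.dvd_gcd fun a ha => hdvd a ha
    rw [hgcd] at this
    exact Nat.dvd_one.mp this
  -- A = range (m + 1)
  have hrange : ∀ k, k ≤ m → k ∈ A := by
    intro k
    induction k with
    | zero => intro _; exact h0
    | succ k ih =>
      intro hkm
      have hkA : k ∈ A := ih (by omega)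
      have := hstep k hkA (by omega)
      rwa [hd1] at this
  have hAeq : A = Finset.range (m + 1) := by
    apply Finset.Subset.antisymm
    · intro x hx; rw [Finset.mem_range]; have := hle_m x hx; omega
    · intro x hx; rw [Finset.mem_range] at hx; exact hrange x (by omega)
  have : n = m + 1 := by rw [hncard, hAeq, Finset.card_range]
  rw [hAeq, this]
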